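/- Let F be a field of characteristic p. For α, γ ∈ F and β, δ ∈ F×, there is an isomorphism of F-algebras [α,β)_{p,F} ⊗ [γ,δ)_{p,F} ≅ [α+γ, β)_{p,F} ⊗ [γ, β^{-1}δ)_{p,F}. -/

import Mathlib

open scoped TensorProduct

/-- The defining relations of the symbol `p`-algebra
`[a,b)_{p,F} = F⟨x,y : x^p - x = a, y^p = b, yx - xy = y⟩`. -/
inductive SymbolRel (F : Type) [Field F] (p : ℕ) (a b : F) :
    FreeAlgebra F (Fin 2) → FreeAlgebra F (Fin 2) → Prop
  | x : SymbolRel F p a b (FreeAlgebra.ι F 0 ^ p - FreeAlgebra.ι F 0) (algebraMap F _ a)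
  | y : SymbolRel F p a b (FreeAlgebra.ι F 1 ^ p) (algebraMap F _ b)
  | comm : SymbolRel F p a b
      (FreeAlgebra.ι F 1 * FreeAlgebra.ι F 0 - FreeAlgebra.ι F 0 * FreeAlgebra.ι F 1)
      (FreeAlgebra.ι F 1)

/-- The symbol `p`-algebra `[a,b)_{p,F}`. -/
abbrev SymbolAlg (F : Type) [Field F] (p : ℕ) (a b : F) : Type :=
  RingQuot (SymbolRel F p a b)

namespace SymbolAux

variable (F : Type) [Field F] (p : ℕ) (a b : F)

/-- The generator `x` of `[a,b)`. -/
noncomputable def X : SymbolAlg F p a b :=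
  RingQuot.mkAlgHom F (SymbolRel F p a b) (FreeAlgebra.ι F 0)

/-- The generator `y` of `[a,b)`. -/
noncomputable def Y : SymbolAlg F p a b :=
  RingQuot.mkAlgHom F (SymbolRel F p a b) (FreeAlgebra.ι F 1)

theorem Xr : X F p a b ^ p - X F p a b = algebraMap F _ a := by
  have h := RingQuot.mkAlgHom_rel F (SymbolRel.x (F := F) (p := p) (a := a) (b := b))
  simpa only [X, map_sub, map_pow, AlgHom.commutes] using h

theorem Yr : Y F p a b ^ p = algebraMap F _ b := by
  have h := RingQuot.mkAlgHom_rel F (SymbolRel.y (F := F) (p := p) (a := a) (b := b))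
  simpa only [Y, map_pow, AlgHom.commutes] using h

theorem Cr : Y F p a b * X F p a b - X F p a b * Y F p a b = Y F p a b := by
  have h := RingQuot.mkAlgHom_rel F (SymbolRel.comm (F := F) (p := p) (a := a) (b := b))
  simpa only [X, Y, map_sub, map_mul] using h

theorem Xr' : X F p a b ^ p = X F p a b + algebraMap F _ a := by
  have h := Xr F p a b
  rw [sub_eq_iff_eq_add] at h
  rw [h, add_comm]

theorem Cr' : Y F p a b * X F p a b = X F p a b * Y F p a b + Y F p a b :=
  sub_eq_iff_eq_add'.mp (Cr F p a b)

variable {F p a b}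

/-- Lift a pair of elements satisfying the relations to an algebra map out of `[a,b)`. -/
noncomputable def lift {A : Type} [Ring A] [Algebra F A] (x y : A)
    (hx : x ^ p - x = algebraMap F A a) (hy : y ^ p = algebraMap F A b)
    (hc : y * x - x * y = y) : SymbolAlg F p a b →ₐ[F] A :=
  RingQuot.liftAlgHom F ⟨FreeAlgebra.lift F ![x, y], by
    intro u v h
    induction h with
    | x => simpa using hx
    | y => simpa using hy
    | comm => simpa using hc⟩

@[simp] theorem lift_X {A : Type} [Ring A] [Algebra F A] (x y : A)
    (hx : x ^ p - x = algebraMap F A a) (hy : y ^ p = algebraMap F A b)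
    (hc : y * x - x * y = y) : lift x y hx hy hc (X F p a b) = x := by
  rw [lift, X, RingQuot.liftAlgHom_mkAlgHom_apply]
  simp

@[simp] theorem lift_Y {A : Type} [Ring A] [Algebra F A] (x y : A)
    (hx : x ^ p - x = algebraMap F A a) (hy : y ^ p = algebraMap F A b)
    (hc : y * x - x * y = y) : lift x y hx hy hc (Y F p a b) = y := by
  rw [lift, Y, RingQuot.liftAlgHom_mkAlgHom_apply]
  simp

theorem hom_ext {A : Type} [Semiring A] [Algebra F A] {f g : SymbolAlg F p a b →ₐ[F] A}
    (hX : f (X F p a b) = g (X F p a b)) (hY : f (Y F p a b) = g (Y F p a b)) : f = g := by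
  apply RingQuot.ringQuot_ext'
  apply FreeAlgebra.hom_ext
  funext i
  fin_cases i
  · exact hX
  · exact hY

theorem commute_all {T : Type} [Ring T] [Algebra F T] (f : SymbolAlg F p a b →ₐ[F] T) (t : T)
    (hX : Commute (f (X F p a b)) t) (hY : Commute (f (Y F p a b)) t) (s : SymbolAlg F p a b) :
    Commute (f s) t := by
  obtain ⟨s, rfl⟩ := RingQuot.mkAlgHom_surjective F _ s
  induction s using FreeAlgebra.induction with
  | grade0 r =>
    rw [AlgHom.commutes, AlgHom.commutes]
    exact Algebra.commute_algebraMap_left r t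
  | grade1 i =>
    fin_cases i
    · exact hX
    · exact hY
  | mul x y hx hy => rw [map_mul, map_mul]; exact hx.mul_left hy
  | add x y hx hy => rw [map_add, map_add]; exact hx.add_left hy

theorem commute_pair {c d : F} {T : Type} [Ring T] [Algebra F T]
    (f : SymbolAlg F p a b →ₐ[F] T) (g : SymbolAlg F p c d →ₐ[F] T)
    (hXX : Commute (f (X F p a b)) (g (X F p c d)))
    (hXY : Commute (f (X F p a b)) (g (Y F p c d)))
    (hYX : Commute (f (Y F p a b)) (g (X F p c d)))
    (hYY : Commute (f (Y F p a b)) (g (Y F p c d)))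
    (s : SymbolAlg F p a b) (t : SymbolAlg F p c d) : Commute (f s) (g t) :=
  (commute_all g (f s)
    ((commute_all f (g (X F p c d)) hXX hYX s).symm)
    ((commute_all f (g (Y F p c d)) hXY hYY s).symm) t).symm

theorem lift_commute_pair {c d : F} {T : Type} [Ring T] [Algebra F T]
    {x y : T} {hx : x ^ p - x = algebraMap F T a} {hy : y ^ p = algebraMap F T b}
    {hc : y * x - x * y = y}
    {x' y' : T} {hx' : x' ^ p - x' = algebraMap F T c} {hy' : y' ^ p = algebraMap F T d}
    {hc' : y' * x' - x' * y' = y'}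
    (hXX : Commute x x') (hXY : Commute x y') (hYX : Commute y x') (hYY : Commute y y')
    (s : SymbolAlg F p a b) (t : SymbolAlg F p c d) :
    Commute ((lift x y hx hy hc) s) ((lift x' y' hx' hy' hc') t) := by
  refine commute_pair _ _ ?_ ?_ ?_ ?_ s t
  · simpa using hXX
  · simpa using hXY
  · simpa using hYX
  · simpa using hYY

section CharStuff

variable [CharP F p]

theorem pcast_zero (T : Type) [Ring T] [Algebra F T] : ((p : ℕ) : T) = 0 := by
  rw [← map_natCast (algebraMap F T) p, CharP.cast_eq_zero, map_zero]

theorem add_pow_p (hp : p.Prime) {T : Type} [Ring T] [Algebra F T] {s t : T}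
    (h : Commute s t) : (s + t) ^ p = s ^ p + t ^ p := by
  obtain ⟨r, hr⟩ := h.exists_add_pow_prime_eq hp
  rw [hr, pcast_zero (F := F) (p := p) T, zero_mul, zero_mul, zero_mul, add_zero]

theorem neg_one_pow_p (hp : p.Prime) (T : Type) [Ring T] [Algebra F T] :
    (-1 : T) ^ p = -1 := by
  rcases hp.eq_two_or_odd' with h | h
  · subst h
    have h2 : ((2 : ℕ) : T) = 0 := pcast_zero (F := F) (p := 2) T
    have h1 : (1 : T) + 1 = 0 := by rw [one_add_one_eq_two]; exact_mod_cast h2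
    rw [pow_two, neg_one_mul, neg_neg]
    exact eq_neg_of_add_eq_zero_left h1
  · exact h.neg_one_pow

theorem sub_pow_p (hp : p.Prime) {T : Type} [Ring T] [Algebra F T] {s t : T}
    (h : Commute s t) : (s - t) ^ p = s ^ p - t ^ p := by
  rw [sub_eq_add_neg, add_pow_p (F := F) hp h.neg_right, neg_pow,
    neg_one_pow_p (F := F) hp T, neg_one_mul, ← sub_eq_add_neg]

end CharStuff

section Generic

variable {T : Type} [Ring T]

theorem commute_sub_left_aux {s t u : T} (h1 : Commute s u) (h2 : Commute t u) :
    Commute (s - t) u := h1.sub_left h2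

theorem commute_add_left_aux {s t u : T} (h1 : Commute s u) (h2 : Commute t u) :
    Commute (s + t) u := h1.add_left h2

theorem rel_c_sub {x1 x2 y : T} (h1 : y * x1 - x1 * y = y) (h2 : y * x2 = x2 * y) :
    y * (x1 - x2) - (x1 - x2) * y = y := by
  have e : y * (x1 - x2) - (x1 - x2) * y = (y * x1 - x1 * y) - (y * x2 - x2 * y) := by
    rw [mul_sub, sub_mul]; abel
  rw [e, h1, h2, sub_self, sub_zero]

theorem rel_c_add {x1 x2 y : T} (h1 : y * x1 - x1 * y = y) (h2 : y * x2 = x2 * y) :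
    y * (x1 + x2) - (x1 + x2) * y = y := by
  have e : y * (x1 + x2) - (x1 + x2) * y = (y * x1 - x1 * y) + (y * x2 - x2 * y) := by
    rw [mul_add, add_mul]; abel
  rw [e, h1, h2, sub_self, add_zero]

theorem commute_of_rel_pp {s t w : T} (hs : w * s = s * w + w) (ht : w * t = t * w + w) :
    Commute (s - t) w := by
  show (s - t) * w = w * (s - t)
  rw [sub_mul, mul_sub, hs, ht]; abel

theorem commute_of_rel_mp {s t w : T} (hs : w * s = s * w - w) (ht : w * t = t * w + w) :
    Commute (s + t) w := by
  show (s + t) * w = w * (s + t)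
  rw [add_mul, mul_add, hs, ht]; abel

end Generic

section RelX

variable [CharP F p]

theorem rel_x_sub (hp : p.Prime) {T : Type} [Ring T] [Algebra F T] {s t : T} {A B : F}
    (h : Commute s t) (hs : s ^ p - s = algebraMap F T A) (ht : t ^ p - t = algebraMap F T B) :
    (s - t) ^ p - (s - t) = algebraMap F T (A - B) := by
  rw [sub_pow_p (F := F) hp h, map_sub, ← hs, ← ht]; abel

theorem rel_x_add (hp : p.Prime) {T : Type} [Ring T] [Algebra F T] {s t : T} {A B : F}
    (h : Commute s t) (hs : s ^ p - s = algebraMap F T A) (ht : t ^ p - t = algebraMap F T B) :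
    (s + t) ^ p - (s + t) = algebraMap F T (A + B) := by
  rw [add_pow_p (F := F) hp h, map_add, ← hs, ← ht]; abel

end RelX

section Yinv

/-- The inverse of the generator `y`. -/
noncomputable def Yi : SymbolAlg F p a b :=
  algebraMap F _ b⁻¹ * Y F p a b ^ (p - 1)

variable (hp : 1 ≤ p) (hb : b ≠ 0)
include hp hb

theorem Y_mul_Yi : Y F p a b * Yi = 1 := by
  rw [Yi, ← mul_assoc, ← Algebra.commutes, mul_assoc, ← pow_succ',
    Nat.sub_add_cancel hp, Yr, ← map_mul, inv_mul_cancel₀ hb, map_one]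

theorem Yi_mul_Y : Yi * Y F p a b = 1 := by
  rw [Yi, mul_assoc, ← pow_succ, Nat.sub_add_cancel hp, Yr, ← map_mul,
    inv_mul_cancel₀ hb, map_one]

theorem X_aux : X F p a b = Yi * X F p a b * Y F p a b + 1 := by
  calc X F p a b = (Yi * Y F p a b) * X F p a b := by rw [Yi_mul_Y hp hb, one_mul]
    _ = Yi * (Y F p a b * X F p a b) := by rw [mul_assoc]
    _ = Yi * (X F p a b * Y F p a b + Y F p a b) := by rw [Cr']
    _ = Yi * X F p a b * Y F p a b + 1 := by
        rw [mul_add, Yi_mul_Y hp hb, ← mul_assoc]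

theorem X_mul_Yi : X F p a b * Yi = Yi * X F p a b + Yi := by
  conv_lhs => rw [X_aux hp hb]
  rw [add_mul, one_mul, mul_assoc, Y_mul_Yi hp hb, mul_one]

end Yinv

theorem Yi_pow (hp : 1 ≤ p) (hb : b ≠ 0) :
    (Yi : SymbolAlg F p a b) ^ p = algebraMap F _ b⁻¹ := by
  have key : b⁻¹ ^ p * b ^ (p - 1) = b⁻¹ := by
    obtain ⟨n, rfl⟩ : ∃ n, p = n + 1 := ⟨p - 1, (Nat.sub_add_cancel hp).symm⟩
    rw [Nat.add_sub_cancel, pow_succ, mul_comm (b⁻¹ ^ n) b⁻¹, mul_assoc, ← mul_pow,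
      inv_mul_cancel₀ hb, one_pow, mul_one]
  rw [Yi, Commute.mul_pow (Algebra.commute_algebraMap_left _ _), ← map_pow,
    pow_right_comm, Yr, ← map_pow, ← map_mul, key]

section Tensor

variable {C D : Type} [Ring C] [Algebra F C] [Ring D] [Algebra F D]

theorem alg_tmul_alg (c d : F) :
    (algebraMap F C c) ⊗ₜ[F] (algebraMap F D d) = algebraMap F (C ⊗[F] D) (c * d) := by
  calc (algebraMap F C c) ⊗ₜ[F] (algebraMap F D d)
      = ((algebraMap F C c) ⊗ₜ[F] (1 : D)) * ((1 : C) ⊗ₜ[F] (algebraMap F D d)) := by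
        rw [Algebra.TensorProduct.tmul_mul_tmul, mul_one, one_mul]
    _ = algebraMap F (C ⊗[F] D) c * algebraMap F (C ⊗[F] D) d := by
        rw [← Algebra.TensorProduct.algebraMap_apply, ← Algebra.TensorProduct.algebraMap_apply']
    _ = algebraMap F (C ⊗[F] D) (c * d) := (map_mul _ _ _).symm

theorem commute_tmul {c c' : C} {d d' : D} (h1 : c * c' = c' * c) (h2 : d * d' = d' * d) :
    Commute (c ⊗ₜ[F] d) (c' ⊗ₜ[F] d') := by
  show _ = _
  rw [Algebra.TensorProduct.tmul_mul_tmul, Algebra.TensorProduct.tmul_mul_tmul, h1, h2]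

theorem tmul_commute (c : C) (d : D) : Commute (c ⊗ₜ[F] (1 : D)) ((1 : C) ⊗ₜ[F] d) := by
  show _ = _
  rw [Algebra.TensorProduct.tmul_mul_tmul, Algebra.TensorProduct.tmul_mul_tmul,
    one_mul, mul_one, one_mul, mul_one]

end Tensor

end SymbolAux

set_option maxHeartbeats 2000000 in
open SymbolAux in
/-- `[α,β) ⊗ [γ,δ) ≅ [α+γ,β) ⊗ [γ,β⁻¹δ)`. -/
theorem symbol_tensor_slide (p : ℕ) (hp : p.Prime) (F : Type) [Field F] [CharP F p]
    (α γ β δ : F) (hβ : β ≠ 0) (hδ : δ ≠ 0) :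
    Nonempty ((SymbolAlg F p α β ⊗[F] SymbolAlg F p γ δ) ≃ₐ[F]
      (SymbolAlg F p (α + γ) β ⊗[F] SymbolAlg F p γ (β⁻¹ * δ))) := by
  have hp1 : 1 ≤ p := hp.one_le
  -- basic single-tensor relations in T
  have hsT : ((X F p (α + γ) β) ⊗ₜ[F] (1 : SymbolAlg F p γ (β⁻¹ * δ))) ^ p - (X F p (α + γ) β) ⊗ₜ[F] (1 : SymbolAlg F p γ (β⁻¹ * δ)) = algebraMap F (SymbolAlg F p (α + γ) β ⊗[F] SymbolAlg F p γ (β⁻¹ * δ)) (α + γ) := by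
    rw [Algebra.TensorProduct.tmul_pow, one_pow, ← TensorProduct.sub_tmul, Xr,
      Algebra.TensorProduct.algebraMap_apply]
  have htT : ((1 : SymbolAlg F p (α + γ) β) ⊗ₜ[F] (X F p γ (β⁻¹ * δ))) ^ p - ((1 : SymbolAlg F p (α + γ) β) ⊗ₜ[F] (X F p γ (β⁻¹ * δ))) = algebraMap F (SymbolAlg F p (α + γ) β ⊗[F] SymbolAlg F p γ (β⁻¹ * δ)) γ := by
    rw [Algebra.TensorProduct.tmul_pow, one_pow, ← TensorProduct.tmul_sub, Xr,
      Algebra.TensorProduct.algebraMap_apply']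
  -- relations for ψA : [α,β) → T
  have pf1 : ((X F p (α + γ) β) ⊗ₜ[F] (1 : SymbolAlg F p γ (β⁻¹ * δ)) - (1 : SymbolAlg F p (α + γ) β) ⊗ₜ[F] (X F p γ (β⁻¹ * δ))) ^ p - ((X F p (α + γ) β) ⊗ₜ[F] (1 : SymbolAlg F p γ (β⁻¹ * δ)) - (1 : SymbolAlg F p (α + γ) β) ⊗ₜ[F] (X F p γ (β⁻¹ * δ))) = algebraMap F (SymbolAlg F p (α + γ) β ⊗[F] SymbolAlg F p γ (β⁻¹ * δ)) α := by
    have h := rel_x_sub (F := F) hp (tmul_commute (X F p (α + γ) β) (X F p γ (β⁻¹ * δ))) hsT htT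
    rwa [add_sub_cancel_right] at h
  have pf2 : ((Y F p (α + γ) β) ⊗ₜ[F] (1 : SymbolAlg F p γ (β⁻¹ * δ))) ^ p = algebraMap F (SymbolAlg F p (α + γ) β ⊗[F] SymbolAlg F p γ (β⁻¹ * δ)) β := by
    rw [Algebra.TensorProduct.tmul_pow, one_pow, Yr, Algebra.TensorProduct.algebraMap_apply]
  have pf3 : ((Y F p (α + γ) β) ⊗ₜ[F] (1 : SymbolAlg F p γ (β⁻¹ * δ))) * ((X F p (α + γ) β) ⊗ₜ[F] (1 : SymbolAlg F p γ (β⁻¹ * δ)) - (1 : SymbolAlg F p (α + γ) β) ⊗ₜ[F] (X F p γ (β⁻¹ * δ))) - ((X F p (α + γ) β) ⊗ₜ[F] (1 : SymbolAlg F p γ (β⁻¹ * δ)) - (1 : SymbolAlg F p (α + γ) β) ⊗ₜ[F] (X F p γ (β⁻¹ * δ))) * ((Y F p (α + γ) β) ⊗ₜ[F] (1 : SymbolAlg F p γ (β⁻¹ * δ))) = ((Y F p (α + γ) β) ⊗ₜ[F] (1 : SymbolAlg F p γ (β⁻¹ * δ))) := by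
    have h1 : ((Y F p (α + γ) β) ⊗ₜ[F] (1 : SymbolAlg F p γ (β⁻¹ * δ))) * ((X F p (α + γ) β) ⊗ₜ[F] (1 : SymbolAlg F p γ (β⁻¹ * δ))) - ((X F p (α + γ) β) ⊗ₜ[F] (1 : SymbolAlg F p γ (β⁻¹ * δ))) * ((Y F p (α + γ) β) ⊗ₜ[F] (1 : SymbolAlg F p γ (β⁻¹ * δ))) = ((Y F p (α + γ) β) ⊗ₜ[F] (1 : SymbolAlg F p γ (β⁻¹ * δ))) := by
      rw [Algebra.TensorProduct.tmul_mul_tmul, Algebra.TensorProduct.tmul_mul_tmul, one_mul, ← TensorProduct.sub_tmul, Cr]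
    exact rel_c_sub h1 (tmul_commute (Y F p (α + γ) β) (X F p γ (β⁻¹ * δ))).eq
  -- relations for ψB : [γ,δ) → T
  have pf5 : ((Y F p (α + γ) β) ⊗ₜ[F] (Y F p γ (β⁻¹ * δ))) ^ p = algebraMap F (SymbolAlg F p (α + γ) β ⊗[F] SymbolAlg F p γ (β⁻¹ * δ)) δ := by
    rw [Algebra.TensorProduct.tmul_pow, Yr, Yr, alg_tmul_alg,
      show β * (β⁻¹ * δ) = δ by field_simp]
  have pf6 : ((Y F p (α + γ) β) ⊗ₜ[F] (Y F p γ (β⁻¹ * δ))) * ((1 : SymbolAlg F p (α + γ) β) ⊗ₜ[F] (X F p γ (β⁻¹ * δ))) - ((1 : SymbolAlg F p (α + γ) β) ⊗ₜ[F] (X F p γ (β⁻¹ * δ))) * ((Y F p (α + γ) β) ⊗ₜ[F] (Y F p γ (β⁻¹ * δ))) = ((Y F p (α + γ) β) ⊗ₜ[F] (Y F p γ (β⁻¹ * δ))) := by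
    rw [Algebra.TensorProduct.tmul_mul_tmul, Algebra.TensorProduct.tmul_mul_tmul, one_mul, mul_one, ← TensorProduct.tmul_sub, Cr]
  -- commutation for (ψA, ψB)
  have cF1 : Commute ((X F p (α + γ) β) ⊗ₜ[F] (1 : SymbolAlg F p γ (β⁻¹ * δ)) - (1 : SymbolAlg F p (α + γ) β) ⊗ₜ[F] (X F p γ (β⁻¹ * δ))) ((1 : SymbolAlg F p (α + γ) β) ⊗ₜ[F] (X F p γ (β⁻¹ * δ))) :=
    commute_sub_left_aux (tmul_commute (X F p (α + γ) β) (X F p γ (β⁻¹ * δ))) (Commute.refl ((1 : SymbolAlg F p (α + γ) β) ⊗ₜ[F] (X F p γ (β⁻¹ * δ))))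
  have cF2 : Commute ((X F p (α + γ) β) ⊗ₜ[F] (1 : SymbolAlg F p γ (β⁻¹ * δ)) - (1 : SymbolAlg F p (α + γ) β) ⊗ₜ[F] (X F p γ (β⁻¹ * δ))) ((Y F p (α + γ) β) ⊗ₜ[F] (Y F p γ (β⁻¹ * δ))) := by
    have e1 : ((Y F p (α + γ) β) ⊗ₜ[F] (Y F p γ (β⁻¹ * δ))) * ((X F p (α + γ) β) ⊗ₜ[F] (1 : SymbolAlg F p γ (β⁻¹ * δ))) = ((X F p (α + γ) β) ⊗ₜ[F] (1 : SymbolAlg F p γ (β⁻¹ * δ))) * ((Y F p (α + γ) β) ⊗ₜ[F] (Y F p γ (β⁻¹ * δ))) + ((Y F p (α + γ) β) ⊗ₜ[F] (Y F p γ (β⁻¹ * δ))) := by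
      rw [Algebra.TensorProduct.tmul_mul_tmul, Algebra.TensorProduct.tmul_mul_tmul, mul_one, one_mul, Cr', TensorProduct.add_tmul]
    have e2 : ((Y F p (α + γ) β) ⊗ₜ[F] (Y F p γ (β⁻¹ * δ))) * ((1 : SymbolAlg F p (α + γ) β) ⊗ₜ[F] (X F p γ (β⁻¹ * δ))) = ((1 : SymbolAlg F p (α + γ) β) ⊗ₜ[F] (X F p γ (β⁻¹ * δ))) * ((Y F p (α + γ) β) ⊗ₜ[F] (Y F p γ (β⁻¹ * δ))) + ((Y F p (α + γ) β) ⊗ₜ[F] (Y F p γ (β⁻¹ * δ))) := by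
      rw [Algebra.TensorProduct.tmul_mul_tmul, Algebra.TensorProduct.tmul_mul_tmul, mul_one, one_mul, Cr', TensorProduct.tmul_add]
    exact commute_of_rel_pp e1 e2
  have cF3 : Commute ((Y F p (α + γ) β) ⊗ₜ[F] (1 : SymbolAlg F p γ (β⁻¹ * δ))) ((1 : SymbolAlg F p (α + γ) β) ⊗ₜ[F] (X F p γ (β⁻¹ * δ))) := tmul_commute (Y F p (α + γ) β) (X F p γ (β⁻¹ * δ))
  have cF4 : Commute ((Y F p (α + γ) β) ⊗ₜ[F] (1 : SymbolAlg F p γ (β⁻¹ * δ))) ((Y F p (α + γ) β) ⊗ₜ[F] (Y F p γ (β⁻¹ * δ))) := by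
    have h : ((Y F p (α + γ) β) ⊗ₜ[F] (1 : SymbolAlg F p γ (β⁻¹ * δ))) * ((Y F p (α + γ) β) ⊗ₜ[F] (Y F p γ (β⁻¹ * δ))) = ((Y F p (α + γ) β) ⊗ₜ[F] (Y F p γ (β⁻¹ * δ))) * ((Y F p (α + γ) β) ⊗ₜ[F] (1 : SymbolAlg F p γ (β⁻¹ * δ))) := by
      rw [Algebra.TensorProduct.tmul_mul_tmul, Algebra.TensorProduct.tmul_mul_tmul, one_mul, mul_one]
    exact h
  -- basic single-tensor relations in S
  have hsS : ((X F p α β) ⊗ₜ[F] (1 : SymbolAlg F p γ δ)) ^ p - (X F p α β) ⊗ₜ[F] (1 : SymbolAlg F p γ δ) = algebraMap F (SymbolAlg F p α β ⊗[F] SymbolAlg F p γ δ) α := by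
    rw [Algebra.TensorProduct.tmul_pow, one_pow, ← TensorProduct.sub_tmul, Xr,
      Algebra.TensorProduct.algebraMap_apply]
  have htS : ((1 : SymbolAlg F p α β) ⊗ₜ[F] (X F p γ δ)) ^ p - ((1 : SymbolAlg F p α β) ⊗ₜ[F] (X F p γ δ)) = algebraMap F (SymbolAlg F p α β ⊗[F] SymbolAlg F p γ δ) γ := by
    rw [Algebra.TensorProduct.tmul_pow, one_pow, ← TensorProduct.tmul_sub, Xr,
      Algebra.TensorProduct.algebraMap_apply']
  -- relations for φC : [α+γ,β) → S
  have pf7 : ((X F p α β) ⊗ₜ[F] (1 : SymbolAlg F p γ δ) + (1 : SymbolAlg F p α β) ⊗ₜ[F] (X F p γ δ)) ^ p - ((X F p α β) ⊗ₜ[F] (1 : SymbolAlg F p γ δ) + (1 : SymbolAlg F p α β) ⊗ₜ[F] (X F p γ δ)) = algebraMap F (SymbolAlg F p α β ⊗[F] SymbolAlg F p γ δ) (α + γ) :=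
    rel_x_add (F := F) hp (tmul_commute (X F p α β) (X F p γ δ)) hsS htS
  have pf8 : ((Y F p α β) ⊗ₜ[F] (1 : SymbolAlg F p γ δ)) ^ p = algebraMap F (SymbolAlg F p α β ⊗[F] SymbolAlg F p γ δ) β := by
    rw [Algebra.TensorProduct.tmul_pow, one_pow, Yr, Algebra.TensorProduct.algebraMap_apply]
  have pf9 : ((Y F p α β) ⊗ₜ[F] (1 : SymbolAlg F p γ δ)) * ((X F p α β) ⊗ₜ[F] (1 : SymbolAlg F p γ δ) + (1 : SymbolAlg F p α β) ⊗ₜ[F] (X F p γ δ)) - ((X F p α β) ⊗ₜ[F] (1 : SymbolAlg F p γ δ) + (1 : SymbolAlg F p α β) ⊗ₜ[F] (X F p γ δ)) * ((Y F p α β) ⊗ₜ[F] (1 : SymbolAlg F p γ δ)) = ((Y F p α β) ⊗ₜ[F] (1 : SymbolAlg F p γ δ)) := by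
    have h1 : ((Y F p α β) ⊗ₜ[F] (1 : SymbolAlg F p γ δ)) * ((X F p α β) ⊗ₜ[F] (1 : SymbolAlg F p γ δ)) - ((X F p α β) ⊗ₜ[F] (1 : SymbolAlg F p γ δ)) * ((Y F p α β) ⊗ₜ[F] (1 : SymbolAlg F p γ δ)) = ((Y F p α β) ⊗ₜ[F] (1 : SymbolAlg F p γ δ)) := by
      rw [Algebra.TensorProduct.tmul_mul_tmul, Algebra.TensorProduct.tmul_mul_tmul, one_mul, ← TensorProduct.sub_tmul, Cr]
    exact rel_c_add h1 (tmul_commute (Y F p α β) (X F p γ δ)).eq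
  -- relations for φD : [γ,β⁻¹δ) → S
  have pf11 : ((Yi (F := F) (p := p) (a := α) (b := β)) ⊗ₜ[F] (Y F p γ δ)) ^ p = algebraMap F (SymbolAlg F p α β ⊗[F] SymbolAlg F p γ δ) (β⁻¹ * δ) := by
    rw [Algebra.TensorProduct.tmul_pow, Yi_pow hp1 hβ, Yr, alg_tmul_alg]
  have pf12 : ((Yi (F := F) (p := p) (a := α) (b := β)) ⊗ₜ[F] (Y F p γ δ)) * ((1 : SymbolAlg F p α β) ⊗ₜ[F] (X F p γ δ)) - ((1 : SymbolAlg F p α β) ⊗ₜ[F] (X F p γ δ)) * ((Yi (F := F) (p := p) (a := α) (b := β)) ⊗ₜ[F] (Y F p γ δ)) = ((Yi (F := F) (p := p) (a := α) (b := β)) ⊗ₜ[F] (Y F p γ δ)) := by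
    rw [Algebra.TensorProduct.tmul_mul_tmul, Algebra.TensorProduct.tmul_mul_tmul, one_mul, mul_one, ← TensorProduct.tmul_sub, Cr]
  -- commutation for (φC, φD)
  have cG1 : Commute ((X F p α β) ⊗ₜ[F] (1 : SymbolAlg F p γ δ) + (1 : SymbolAlg F p α β) ⊗ₜ[F] (X F p γ δ)) ((1 : SymbolAlg F p α β) ⊗ₜ[F] (X F p γ δ)) :=
    commute_add_left_aux (tmul_commute (X F p α β) (X F p γ δ)) (Commute.refl ((1 : SymbolAlg F p α β) ⊗ₜ[F] (X F p γ δ)))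
  have cG2 : Commute ((X F p α β) ⊗ₜ[F] (1 : SymbolAlg F p γ δ) + (1 : SymbolAlg F p α β) ⊗ₜ[F] (X F p γ δ)) ((Yi (F := F) (p := p) (a := α) (b := β)) ⊗ₜ[F] (Y F p γ δ)) := by
    have e1 : ((Yi (F := F) (p := p) (a := α) (b := β)) ⊗ₜ[F] (Y F p γ δ)) * ((X F p α β) ⊗ₜ[F] (1 : SymbolAlg F p γ δ)) = ((X F p α β) ⊗ₜ[F] (1 : SymbolAlg F p γ δ)) * ((Yi (F := F) (p := p) (a := α) (b := β)) ⊗ₜ[F] (Y F p γ δ)) - ((Yi (F := F) (p := p) (a := α) (b := β)) ⊗ₜ[F] (Y F p γ δ)) := by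
      rw [Algebra.TensorProduct.tmul_mul_tmul, Algebra.TensorProduct.tmul_mul_tmul, mul_one, one_mul, ← TensorProduct.sub_tmul, X_mul_Yi hp1 hβ,
        add_sub_cancel_right]
    have e2 : ((Yi (F := F) (p := p) (a := α) (b := β)) ⊗ₜ[F] (Y F p γ δ)) * ((1 : SymbolAlg F p α β) ⊗ₜ[F] (X F p γ δ)) = ((1 : SymbolAlg F p α β) ⊗ₜ[F] (X F p γ δ)) * ((Yi (F := F) (p := p) (a := α) (b := β)) ⊗ₜ[F] (Y F p γ δ)) + ((Yi (F := F) (p := p) (a := α) (b := β)) ⊗ₜ[F] (Y F p γ δ)) := by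
      rw [Algebra.TensorProduct.tmul_mul_tmul, Algebra.TensorProduct.tmul_mul_tmul, mul_one, one_mul, Cr', TensorProduct.tmul_add]
    exact commute_of_rel_mp (T := SymbolAlg F p α β ⊗[F] SymbolAlg F p γ δ)
      (s := (X F p α β) ⊗ₜ[F] (1 : SymbolAlg F p γ δ))
      (t := (1 : SymbolAlg F p α β) ⊗ₜ[F] (X F p γ δ))
      (w := (Yi (F := F) (p := p) (a := α) (b := β)) ⊗ₜ[F] (Y F p γ δ)) e1 e2
  have cG3 : Commute ((Y F p α β) ⊗ₜ[F] (1 : SymbolAlg F p γ δ)) ((1 : SymbolAlg F p α β) ⊗ₜ[F] (X F p γ δ)) := tmul_commute (Y F p α β) (X F p γ δ)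
  have cG4 : Commute ((Y F p α β) ⊗ₜ[F] (1 : SymbolAlg F p γ δ)) ((Yi (F := F) (p := p) (a := α) (b := β)) ⊗ₜ[F] (Y F p γ δ)) := by
    have h : ((Y F p α β) ⊗ₜ[F] (1 : SymbolAlg F p γ δ)) * ((Yi (F := F) (p := p) (a := α) (b := β)) ⊗ₜ[F] (Y F p γ δ)) = ((Yi (F := F) (p := p) (a := α) (b := β)) ⊗ₜ[F] (Y F p γ δ)) * ((Y F p α β) ⊗ₜ[F] (1 : SymbolAlg F p γ δ)) := by
      rw [Algebra.TensorProduct.tmul_mul_tmul, Algebra.TensorProduct.tmul_mul_tmul, one_mul, mul_one, Y_mul_Yi hp1 hβ, Yi_mul_Y hp1 hβ]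
    exact h
  refine ⟨AlgEquiv.ofAlgHom
    (Algebra.TensorProduct.lift (SymbolAux.lift ((X F p (α + γ) β) ⊗ₜ[F] (1 : SymbolAlg F p γ (β⁻¹ * δ)) - (1 : SymbolAlg F p (α + γ) β) ⊗ₜ[F] (X F p γ (β⁻¹ * δ))) ((Y F p (α + γ) β) ⊗ₜ[F] (1 : SymbolAlg F p γ (β⁻¹ * δ))) pf1 pf2 pf3)
      (SymbolAux.lift ((1 : SymbolAlg F p (α + γ) β) ⊗ₜ[F] (X F p γ (β⁻¹ * δ))) ((Y F p (α + γ) β) ⊗ₜ[F] (Y F p γ (β⁻¹ * δ))) htT pf5 pf6) (lift_commute_pair cF1 cF2 cF3 cF4))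
    (Algebra.TensorProduct.lift (SymbolAux.lift ((X F p α β) ⊗ₜ[F] (1 : SymbolAlg F p γ δ) + (1 : SymbolAlg F p α β) ⊗ₜ[F] (X F p γ δ)) ((Y F p α β) ⊗ₜ[F] (1 : SymbolAlg F p γ δ)) pf7 pf8 pf9)
      (SymbolAux.lift ((1 : SymbolAlg F p α β) ⊗ₜ[F] (X F p γ δ)) ((Yi (F := F) (p := p) (a := α) (b := β)) ⊗ₜ[F] (Y F p γ δ)) htS pf11 pf12) (lift_commute_pair cG1 cG2 cG3 cG4))
    ?_ ?_⟩
  · refine Algebra.TensorProduct.ext ?_ ?_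
    · refine hom_ext ?_ ?_
      · simp [AlgHom.coe_comp, Function.comp_apply, Algebra.TensorProduct.includeLeft_apply, Algebra.TensorProduct.includeRight_apply, Algebra.TensorProduct.lift_tmul, lift_X, lift_Y, map_one, one_mul, mul_one, map_add, map_sub, sub_add_cancel, add_sub_cancel_right, AlgHom.coe_id, id_eq]
      · simp [AlgHom.coe_comp, Function.comp_apply, Algebra.TensorProduct.includeLeft_apply, Algebra.TensorProduct.includeRight_apply, Algebra.TensorProduct.lift_tmul, lift_X, lift_Y, map_one, one_mul, mul_one, map_add, map_sub, sub_add_cancel, add_sub_cancel_right, AlgHom.coe_id, id_eq]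
    · refine hom_ext ?_ ?_
      · simp [AlgHom.coe_comp, Function.comp_apply, Algebra.TensorProduct.includeLeft_apply, Algebra.TensorProduct.includeRight_apply, Algebra.TensorProduct.lift_tmul, lift_X, lift_Y, map_one, one_mul, mul_one, map_add, map_sub, sub_add_cancel, add_sub_cancel_right, AlgHom.coe_id, id_eq]
      · -- the v2 generator
        simp only [AlgHom.restrictScalars_apply, AlgHom.coe_comp, Function.comp_apply, Algebra.TensorProduct.includeLeft_apply, Algebra.TensorProduct.includeRight_apply, Algebra.TensorProduct.lift_tmul, lift_X, lift_Y, map_one, one_mul, mul_one, map_add, map_sub, sub_add_cancel, add_sub_cancel_right, AlgHom.coe_id, id_eq, Yi, map_mul, map_pow, AlgHom.commutes,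
          Algebra.TensorProduct.tmul_pow, one_pow]
        rw [mul_assoc, Algebra.TensorProduct.tmul_mul_tmul, one_mul, ← pow_succ, Nat.sub_add_cancel hp1, Yr]
        rw [show (algebraMap F (SymbolAlg F p (α + γ) β) β) ⊗ₜ[F] (Y F p γ (β⁻¹ * δ)) =
            algebraMap F (SymbolAlg F p (α + γ) β ⊗[F] SymbolAlg F p γ (β⁻¹ * δ)) β * ((1 : SymbolAlg F p (α + γ) β) ⊗ₜ[F] (Y F p γ (β⁻¹ * δ))) from by
          rw [Algebra.TensorProduct.algebraMap_apply, Algebra.TensorProduct.tmul_mul_tmul, mul_one, one_mul]]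
        rw [← mul_assoc, ← map_mul, inv_mul_cancel₀ hβ, map_one, one_mul]
  · refine Algebra.TensorProduct.ext ?_ ?_
    · refine hom_ext ?_ ?_
      · simp [AlgHom.coe_comp, Function.comp_apply, Algebra.TensorProduct.includeLeft_apply, Algebra.TensorProduct.includeRight_apply, Algebra.TensorProduct.lift_tmul, lift_X, lift_Y, map_one, one_mul, mul_one, map_add, map_sub, sub_add_cancel, add_sub_cancel_right, AlgHom.coe_id, id_eq]
        abel
      · simp [AlgHom.coe_comp, Function.comp_apply, Algebra.TensorProduct.includeLeft_apply, Algebra.TensorProduct.includeRight_apply, Algebra.TensorProduct.lift_tmul, lift_X, lift_Y, map_one, one_mul, mul_one, map_add, map_sub, sub_add_cancel, add_sub_cancel_right, AlgHom.coe_id, id_eq]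
    · refine hom_ext ?_ ?_
      · simp [AlgHom.coe_comp, Function.comp_apply, Algebra.TensorProduct.includeLeft_apply, Algebra.TensorProduct.includeRight_apply, Algebra.TensorProduct.lift_tmul, lift_X, lift_Y, map_one, one_mul, mul_one, map_add, map_sub, sub_add_cancel, add_sub_cancel_right, AlgHom.coe_id, id_eq]
      · simp only [AlgHom.restrictScalars_apply, AlgHom.coe_comp, Function.comp_apply, Algebra.TensorProduct.includeLeft_apply, Algebra.TensorProduct.includeRight_apply, Algebra.TensorProduct.lift_tmul, lift_X, lift_Y, map_one, one_mul, mul_one, map_add, map_sub, sub_add_cancel, add_sub_cancel_right, AlgHom.coe_id, id_eq]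
        rw [Algebra.TensorProduct.tmul_mul_tmul, Y_mul_Yi hp1 hβ, one_mul]
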